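/- Let Λ and X be complete metric spaces and let S_λ(·), λ ∈ Λ, be a parameterized family of semigroups on X. Assume: (G1) each S_λ(·) has a global attractor 𝒜_λ; (G2) there is a bounded subset D of X with 𝒜_λ ⊆ D for every λ ∈ Λ; and (G3) for each t > 0, the map λ ↦ S_λ(t)x is continuous, uniformly for x in bounded subsets of X. Then there is a residual subset Λ_* of Λ such that the map λ ↦ 𝒜_λ, from Λ into the nonempty closed bounded subsets of X with the Hausdorff metric, is continuous at every λ₀ ∈ Λ_*; in particular the set of continuity points is dense in Λ. -/

import Mathlib

open Filter Topology Metric Bornology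

/-- `A` attracts every bounded set under the semigroup `S`:
`ρ_X(S(t)B, A) → 0` as `t → ∞` for every bounded `B`. -/
def Attracts {X : Type*} [MetricSpace X] (S : ℝ → X → X) (A : Set X) : Prop :=
  ∀ B : Set X, IsBounded B → ∀ ε : ℝ, 0 < ε → ∃ T : ℝ, ∀ t ≥ T, ∀ x ∈ B,
    EMetric.infEdist (S t x) A < ENNReal.ofReal ε

/-- A global attractor for the semigroup `S`: a nonempty compact set that is
invariant and attracts every bounded set. -/
def IsGlobalAttractor {X : Type*} [MetricSpace X] (S : ℝ → X → X) (A : Set X) : Prop :=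
  IsCompact A ∧ A.Nonempty ∧ (∀ t ≥ (0 : ℝ), S t '' A = A) ∧ Attracts S A

/-- Residual continuity of global attractors under (G1)–(G3); in particular the set
of continuity points is dense. -/
theorem stmt3 {Λ X : Type*} [MetricSpace Λ] [CompleteSpace Λ]
    [MetricSpace X] [CompleteSpace X]
    (S : Λ → ℝ → X → X)
    -- each `S l` is a semigroup
    (hid : ∀ l : Λ, S l 0 = id)
    (hsg : ∀ l : Λ, ∀ t ≥ (0 : ℝ), ∀ s ≥ (0 : ℝ), S l (t + s) = S l t ∘ S l s)
    (hcont : ∀ l : Λ, ContinuousOn (fun p : ℝ × X => S l p.1 p.2) {p : ℝ × X | 0 ≤ p.1})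
    -- (G1): global attractors
    (A : Λ → Set X) (hA : ∀ l : Λ, IsGlobalAttractor (S l) (A l))
    -- (G2): a common bounded set containing all attractors
    (D : Set X) (hD : IsBounded D) (hAD : ∀ l : Λ, A l ⊆ D)
    -- (G3): continuity in `λ`, uniformly for `x` in bounded sets
    (hG3 : ∀ t : ℝ, 0 < t → ∀ B : Set X, IsBounded B → ∀ l₀ : Λ, ∀ ε : ℝ, 0 < ε →
      ∃ δ : ℝ, 0 < δ ∧ ∀ l : Λ, dist l l₀ < δ → ∀ x ∈ B,
        dist (S l t x) (S l₀ t x) < ε) :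
    ∃ Λs ∈ residual Λ, Dense Λs ∧
      ∀ l₀ ∈ Λs, ∀ ε : ℝ, 0 < ε → ∃ δ : ℝ, 0 < δ ∧ ∀ l : Λ, dist l l₀ < δ →
        hausdorffDist (A l) (A l₀) < ε := by
  classical
  -- the approximating maps: `g n l = S l (n+1) '' D`
  set g : ℕ → Λ → Set X := fun n l => S l ((n : ℝ) + 1) '' D with hgdef
  -- the attractor is contained in each approximation
  have hsub : ∀ (l : Λ) (n : ℕ), A l ⊆ g n l := by
    intro l n
    have h1 := (hA l).2.2.1 ((n : ℝ) + 1) (by positivity)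
    calc A l = S l ((n : ℝ) + 1) '' A l := h1.symm
      _ ⊆ g n l := Set.image_mono (hAD l)
  -- pointwise convergence of `g n l` to `A l` in the Hausdorff edistance
  have hconv : ∀ (l : Λ) (ε : ℝ), 0 < ε → ∃ N : ℕ, ∀ n ≥ N,
      EMetric.hausdorffEdist (g n l) (A l) ≤ ENNReal.ofReal ε := by
    intro l ε hε
    obtain ⟨T, hT⟩ := (hA l).2.2.2 D hD ε hε
    refine ⟨⌈T⌉₊, fun n hn => EMetric.hausdorffEdist_le_of_infEdist ?_ ?_⟩
    · rintro x ⟨d, hd, rfl⟩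
      have hTn : T ≤ (n : ℝ) + 1 := by
        have h1 : T ≤ (⌈T⌉₊ : ℝ) := Nat.le_ceil T
        have h2 : ((⌈T⌉₊ : ℕ) : ℝ) ≤ (n : ℝ) := Nat.cast_le.2 hn
        linarith
      exact (hT ((n : ℝ) + 1) hTn d hd).le
    · intro y hy
      rw [EMetric.infEdist_zero_of_mem (hsub l n hy)]
      exact zero_le
  -- continuity of `l ↦ g n l` in the Hausdorff edistance, from (G3)
  have hcontg : ∀ (n : ℕ) (l₀ : Λ) (ε : ℝ), 0 < ε → ∃ δ : ℝ, 0 < δ ∧ ∀ l : Λ,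
      dist l l₀ < δ → EMetric.hausdorffEdist (g n l) (g n l₀) ≤ ENNReal.ofReal ε := by
    intro n l₀ ε hε
    obtain ⟨δ, hδ, h⟩ := hG3 ((n : ℝ) + 1) (by positivity) D hD l₀ ε hε
    refine ⟨δ, hδ, fun l hl => EMetric.hausdorffEdist_le_of_infEdist ?_ ?_⟩
    · rintro x ⟨d, hd, rfl⟩
      calc EMetric.infEdist (S l ((n : ℝ) + 1) d) (g n l₀)
          ≤ edist (S l ((n : ℝ) + 1) d) (S l₀ ((n : ℝ) + 1) d) :=
            EMetric.infEdist_le_edist_of_mem ⟨d, hd, rfl⟩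
        _ ≤ ENNReal.ofReal ε := by
            rw [edist_dist]
            exact ENNReal.ofReal_le_ofReal (h l hl d hd).le
    · rintro x ⟨d, hd, rfl⟩
      calc EMetric.infEdist (S l₀ ((n : ℝ) + 1) d) (g n l)
          ≤ edist (S l₀ ((n : ℝ) + 1) d) (S l ((n : ℝ) + 1) d) :=
            EMetric.infEdist_le_edist_of_mem ⟨d, hd, rfl⟩
        _ ≤ ENNReal.ofReal ε := by
            rw [edist_dist, dist_comm]
            exact ENNReal.ofReal_le_ofReal (h l hl d hd).le
  -- the "uniform Cauchy" sets
  set E : ℕ → ℕ → Set Λ := fun N k => {l | ∀ n, N ≤ n → ∀ m, N ≤ m →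
    EMetric.hausdorffEdist (g n l) (g m l) ≤ ENNReal.ofReal (1 / ((k : ℝ) + 1))} with hEdef
  have hEclosed : ∀ N k, IsClosed (E N k) := by
    intro N k
    refine isClosed_of_closure_subset ?_
    intro l hl n hn m hm
    refine ENNReal.le_of_forall_pos_le_add fun η hη _ => ?_
    have hη2 : 0 < (η : ℝ) / 2 := by positivity
    obtain ⟨δ₁, hδ₁, h₁⟩ := hcontg n l ((η : ℝ) / 2) hη2
    obtain ⟨δ₂, hδ₂, h₂⟩ := hcontg m l ((η : ℝ) / 2) hη2
    obtain ⟨l', hl', hdist⟩ := Metric.mem_closure_iff.1 hl (min δ₁ δ₂) (lt_min hδ₁ hδ₂)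
    have hd1 : dist l' l < δ₁ := by rw [dist_comm]; exact hdist.trans_le (min_le_left _ _)
    have hd2 : dist l' l < δ₂ := by rw [dist_comm]; exact hdist.trans_le (min_le_right _ _)
    have e1 : EMetric.hausdorffEdist (g n l) (g n l') ≤ ENNReal.ofReal ((η : ℝ) / 2) := by
      rw [show ∀ s t : Set X, EMetric.hausdorffEdist s t = EMetric.hausdorffEdist t s from fun s t => Metric.hausdorffEDist_comm]; exact h₁ l' hd1
    have e2 : EMetric.hausdorffEdist (g m l') (g m l) ≤ ENNReal.ofReal ((η : ℝ) / 2) := h₂ l' hd2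
    have e3 := hl' n hn m hm
    have hsum : ENNReal.ofReal ((η : ℝ) / 2) + ENNReal.ofReal ((η : ℝ) / 2)
        = (η : ENNReal) := by
      rw [← ENNReal.ofReal_add (by positivity) (by positivity)]
      rw [add_halves, ENNReal.ofReal_coe_nnreal]
    calc EMetric.hausdorffEdist (g n l) (g m l)
        ≤ EMetric.hausdorffEdist (g n l) (g n l') +
            EMetric.hausdorffEdist (g n l') (g m l) := EMetric.hausdorffEdist_triangle
      _ ≤ EMetric.hausdorffEdist (g n l) (g n l') +
            (EMetric.hausdorffEdist (g n l') (g m l') +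
              EMetric.hausdorffEdist (g m l') (g m l)) := by
            gcongr
            exact EMetric.hausdorffEdist_triangle
      _ ≤ ENNReal.ofReal ((η : ℝ) / 2) + (ENNReal.ofReal (1 / ((k : ℝ) + 1)) +
            ENNReal.ofReal ((η : ℝ) / 2)) := by gcongr
      _ = ENNReal.ofReal (1 / ((k : ℝ) + 1)) + (η : ENNReal) := by
            rw [← hsum]; ring
  have hcover : ∀ k : ℕ, (⋃ N : ℕ, E N k) = Set.univ := by
    intro k
    refine Set.eq_univ_of_forall fun l => Set.mem_iUnion.2 ?_
    have hk2 : 0 < (1 / ((k : ℝ) + 1)) / 2 := by positivity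
    obtain ⟨N, hN⟩ := hconv l ((1 / ((k : ℝ) + 1)) / 2) hk2
    refine ⟨N, fun n hn m hm => ?_⟩
    calc EMetric.hausdorffEdist (g n l) (g m l)
        ≤ EMetric.hausdorffEdist (g n l) (A l) +
            EMetric.hausdorffEdist (A l) (g m l) := EMetric.hausdorffEdist_triangle
      _ ≤ ENNReal.ofReal ((1 / ((k : ℝ) + 1)) / 2) +
            ENNReal.ofReal ((1 / ((k : ℝ) + 1)) / 2) := by
          refine add_le_add (hN n hn) ?_
          rw [show ∀ s t : Set X, EMetric.hausdorffEdist s t = EMetric.hausdorffEdist t s from fun s t => Metric.hausdorffEDist_comm]; exact hN m hm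
      _ = ENNReal.ofReal (1 / ((k : ℝ) + 1)) := by
          rw [← ENNReal.ofReal_add (by positivity) (by positivity), add_halves]
  -- the residual set
  refine ⟨⋂ k : ℕ, ⋃ N : ℕ, interior (E N k), ?_, ?_, ?_⟩
  · refine (countable_iInter_mem).2 fun k => ?_
    exact residual_of_dense_open (isOpen_iUnion fun N => isOpen_interior)
      (dense_iUnion_interior_of_closed (fun N => hEclosed N k) (hcover k))
  · exact dense_of_mem_residual ((countable_iInter_mem).2 fun k =>
      residual_of_dense_open (isOpen_iUnion fun N => isOpen_interior)
        (dense_iUnion_interior_of_closed (fun N => hEclosed N k) (hcover k)))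
  -- continuity at points of the residual set
  intro l₀ hl₀ ε hε
  obtain ⟨k, hk⟩ := exists_nat_one_div_lt (show (0 : ℝ) < ε / 4 by linarith)
  obtain ⟨N, hN⟩ := Set.mem_iUnion.1 (Set.mem_iInter.1 hl₀ k)
  obtain ⟨δ₁, hδ₁, hball⟩ := Metric.mem_nhds_iff.1 (mem_interior_iff_mem_nhds.1 hN)
  obtain ⟨δ₂, hδ₂, h₂⟩ := hcontg N l₀ (ε / 4) (by linarith)
  refine ⟨min δ₁ δ₂, lt_min hδ₁ hδ₂, fun l hl => ?_⟩
  have hlE : l ∈ E N k := hball (Metric.mem_ball.2 (hl.trans_le (min_le_left _ _)))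
  have hl₀E : l₀ ∈ E N k := interior_subset hN
  -- for any `l' ∈ E N k`, the attractor is `1/(k+1)`-close to `g N l'`
  have key : ∀ l' ∈ E N k, EMetric.hausdorffEdist (A l') (g N l')
      ≤ ENNReal.ofReal (1 / ((k : ℝ) + 1)) := by
    intro l' hl'
    refine ENNReal.le_of_forall_pos_le_add fun η hη _ => ?_
    obtain ⟨M, hM⟩ := hconv l' (η : ℝ) hη
    set n := max N M with hn
    calc EMetric.hausdorffEdist (A l') (g N l')
        ≤ EMetric.hausdorffEdist (A l') (g n l') +
            EMetric.hausdorffEdist (g n l') (g N l') := EMetric.hausdorffEdist_triangle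
      _ ≤ (η : ENNReal) + ENNReal.ofReal (1 / ((k : ℝ) + 1)) := by
          refine add_le_add ?_ (hl' n (le_max_left _ _) N le_rfl)
          rw [show ∀ s t : Set X, EMetric.hausdorffEdist s t = EMetric.hausdorffEdist t s from fun s t => Metric.hausdorffEDist_comm, ← ENNReal.ofReal_coe_nnreal]
          exact hM n (le_max_right _ _)
      _ = ENNReal.ofReal (1 / ((k : ℝ) + 1)) + (η : ENNReal) := add_comm _ _
  -- assemble the estimate
  have hmain : EMetric.hausdorffEdist (A l) (A l₀) < ENNReal.ofReal ε := by
    have c1 := key l hlE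
    have c2 := key l₀ hl₀E
    have c3 : EMetric.hausdorffEdist (g N l) (g N l₀) ≤ ENNReal.ofReal (ε / 4) :=
      h₂ l (hl.trans_le (min_le_right _ _))
    have hkε : ENNReal.ofReal (1 / ((k : ℝ) + 1)) ≤ ENNReal.ofReal (ε / 4) :=
      ENNReal.ofReal_le_ofReal hk.le
    calc EMetric.hausdorffEdist (A l) (A l₀)
        ≤ EMetric.hausdorffEdist (A l) (g N l) +
            EMetric.hausdorffEdist (g N l) (A l₀) := EMetric.hausdorffEdist_triangle
      _ ≤ EMetric.hausdorffEdist (A l) (g N l) +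
            (EMetric.hausdorffEdist (g N l) (g N l₀) +
              EMetric.hausdorffEdist (g N l₀) (A l₀)) := by
          gcongr
          exact EMetric.hausdorffEdist_triangle
      _ ≤ ENNReal.ofReal (ε / 4) + (ENNReal.ofReal (ε / 4) + ENNReal.ofReal (ε / 4)) := by
          refine add_le_add (c1.trans hkε) (add_le_add c3 ?_)
          rw [show ∀ s t : Set X, EMetric.hausdorffEdist s t = EMetric.hausdorffEdist t s from fun s t => Metric.hausdorffEDist_comm]
          exact c2.trans hkε
      _ = ENNReal.ofReal (ε / 4 + (ε / 4 + ε / 4)) := by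
          rw [ENNReal.ofReal_add (by linarith) (by positivity),
            ENNReal.ofReal_add (by linarith) (by linarith)]
      _ < ENNReal.ofReal ε := by
          rw [ENNReal.ofReal_lt_ofReal_iff hε]; linarith
  have hne : EMetric.hausdorffEdist (A l) (A l₀) ≠ ⊤ :=
    (hmain.trans ENNReal.ofReal_lt_top).ne
  exact (ENNReal.lt_ofReal_iff_toReal_lt hne).1 hmain
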